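/- Let the signature contain an absorption pair (f, ε_f) and pairwise distinct constants a, b, c, none of which is ε_f, and let x be a variable. Then the three-element set {f(f(x,c),a), f(f(b,x),a), f(f(b,c),x)} is a minimal complete set of Abs-generalizations of ε_f and f(f(b,c),a). -/

import Mathlib

/- Common development: first-order terms, absorption theories, anti-unification
   equations, configurations and the AUnif transformation rules. -/

namespace AbsAU

/-- First-order terms over a set `F` of function symbols, with variables drawn
from the countably infinite set `ℕ`. -/
inductive Tm (F : Type) : Type where
  | var : ℕ → Tm F
  | app : F → List (Tm F) → Tm F

namespace Tm

variable {F : Type}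

/-- Application of a substitution (given as a total map on variables) to a term. -/
def subst (σ : ℕ → Tm F) : Tm F → Tm F
  | var x => σ x
  | app f ts => app f (ts.attach.map fun t => subst σ t.1)
decreasing_by
  have := List.sizeOf_lt_of_mem t.2
  simp only [Tm.app.sizeOf_spec]
  omega

/-- The head of a term: a variable or a function symbol. -/
def head : Tm F → ℕ ⊕ F
  | var x => Sum.inl x
  | app f _ => Sum.inr f

end Tm

/-- `VarIn x t` holds iff the variable `x` occurs in the term `t`. -/
inductive VarIn {F : Type} : ℕ → Tm F → Prop where
  | var (x : ℕ) : VarIn x (.var x)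
  | app {x : ℕ} {t : Tm F} (f : F) {ts : List (Tm F)} :
      t ∈ ts → VarIn x t → VarIn x (.app f ts)

/-- `SymOcc f t` holds iff the function symbol `f` occurs in the term `t`. -/
inductive SymOcc {F : Type} (f : F) : Tm F → Prop where
  | head (ts : List (Tm F)) : SymOcc f (.app f ts)
  | arg {t : Tm F} (g : F) {ts : List (Tm F)} :
      t ∈ ts → SymOcc f t → SymOcc f (.app g ts)

/-- Signature data: an arity for every symbol and the distinguished wild card
constant `⋆`. -/
structure AbsSig (F : Type) where
  arity : F → ℕ
  star : F
  star_arity : arity star = 0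

/-- Arity-respecting (well-formed) terms. -/
inductive WFT {F : Type} (Sg : AbsSig F) : Tm F → Prop where
  | var (x : ℕ) : WFT Sg (.var x)
  | app {f : F} {ts : List (Tm F)} :
      ts.length = Sg.arity f → (∀ t ∈ ts, WFT Sg t) → WFT Sg (.app f ts)

/-- An absorption theory: finitely many pairs `(f, ε_f)` of a binary symbol
together with its absorption constant, all chosen symbols pairwise distinct and
distinct from the wild card. -/
structure AbsTh {F : Type} (Sg : AbsSig F) where
  pairs : Set (F × F)
  finite : pairs.Finite
  binary : ∀ p ∈ pairs, Sg.arity p.1 = 2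
  constZ : ∀ p ∈ pairs, Sg.arity p.2 = 0
  distinct : ∀ p ∈ pairs, ∀ q ∈ pairs, p ≠ q →
      p.1 ≠ q.1 ∧ p.1 ≠ q.2 ∧ p.2 ≠ q.1 ∧ p.2 ≠ q.2
  ne : ∀ p ∈ pairs, p.1 ≠ p.2
  star_ne : ∀ p ∈ pairs, Sg.star ≠ p.1 ∧ Sg.star ≠ p.2

variable {F : Type}

/-- `≈_Abs` : the least congruence on terms containing all substitution
instances of the absorption axioms `f(ε_f, x) ≈ ε_f` and `f(x, ε_f) ≈ ε_f`. -/
inductive AbsEq {Sg : AbsSig F} (Th : AbsTh Sg) : Tm F → Tm F → Prop where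
  | absL {f e : F} (t : Tm F) : (f, e) ∈ Th.pairs →
      AbsEq Th (.app f [.app e [], t]) (.app e [])
  | absR {f e : F} (t : Tm F) : (f, e) ∈ Th.pairs →
      AbsEq Th (.app f [t, .app e []]) (.app e [])
  | refl (t : Tm F) : AbsEq Th t t
  | symm {s t : Tm F} : AbsEq Th s t → AbsEq Th t s
  | trans {s t u : Tm F} : AbsEq Th s t → AbsEq Th t u → AbsEq Th s u
  | congr (f : F) {ss ts : List (Tm F)} :
      List.Forall₂ (AbsEq Th) ss ts → AbsEq Th (.app f ss) (.app f ts)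

/-- The domain of a substitution. -/
def Dom (σ : ℕ → Tm F) : Set ℕ := {x | σ x ≠ .var x}

/-- A substitution proper has a finite domain. -/
def FinDom (σ : ℕ → Tm F) : Prop := (Dom σ).Finite

/-- The variables occurring in the range of a substitution. -/
def Rvar (σ : ℕ → Tm F) : Set ℕ := {y | ∃ x ∈ Dom σ, VarIn y (σ x)}

/-- `r ≲_Abs s` : `r` is more general than `s` modulo the absorption theory. -/
def MoreGen {Sg : AbsSig F} (Th : AbsTh Sg) (r s : Tm F) : Prop :=
  ∃ σ : ℕ → Tm F, FinDom σ ∧ AbsEq Th (r.subst σ) s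

/-- `r` is an `Abs`-generalization of `s` and `t`. -/
def Gen {Sg : AbsSig F} (Th : AbsTh Sg) (r s t : Tm F) : Prop :=
  MoreGen Th r s ∧ MoreGen Th r t

/-- The set of all `Abs`-generalizations of `s` and `t`. -/
def GAbs {Sg : AbsSig F} (Th : AbsTh Sg) (s t : Tm F) : Set (Tm F) :=
  {r | Gen Th r s t}

/-- `M` is a minimal complete set of `Abs`-generalizations of `s` and `t`. -/
def IsMCSG {Sg : AbsSig F} (Th : AbsTh Sg) (M : Set (Tm F)) (s t : Tm F) : Prop :=
  M ⊆ GAbs Th s t ∧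
  (∀ r ∈ GAbs Th s t, ∃ r' ∈ M, MoreGen Th r r') ∧
  (∀ r ∈ M, ∀ r' ∈ M, MoreGen Th r r' → r = r')

/-- `Abs`-normal forms: no absorption constant occurs as an argument of its
absorption symbol. -/
inductive NF {Sg : AbsSig F} (Th : AbsTh Sg) : Tm F → Prop where
  | var (x : ℕ) : NF Th (.var x)
  | app {f : F} {ts : List (Tm F)} :
      (∀ t ∈ ts, NF Th t) →
      (∀ e : F, (f, e) ∈ Th.pairs → Tm.app e [] ∉ ts) →
      NF Th (.app f ts)

/-- An anti-unification equation (AUE) `lhs ≜_lab rhs`. -/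
structure AUE (F : Type) where
  lhs : Tm F
  lab : ℕ
  rhs : Tm F

/-- The labels of a set of AUEs. -/
def labels (W : Set (AUE F)) : Set ℕ := AUE.lab '' W

/-- A set of AUEs is valid if its labels are pairwise distinct. -/
def ValidAUEs (W : Set (AUE F)) : Prop :=
  ∀ a ∈ W, ∀ b ∈ W, a.lab = b.lab → a = b

/-- The wild card, as a term. -/
def starTm (Sg : AbsSig F) : Tm F := .app Sg.star []

/-- A wild AUE has the wild card on one of its sides. -/
def WildAUE (Sg : AbsSig F) (a : AUE F) : Prop :=
  a.lhs = starTm Sg ∨ a.rhs = starTm Sg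

/-- The heads of `s` and `t` form a related absorption pair. -/
def RelatedAbs {Sg : AbsSig F} (Th : AbsTh Sg) (s t : Tm F) : Prop :=
  ∃ f e : F, (f, e) ∈ Th.pairs ∧
    ((s.head = Sum.inr f ∧ t.head = Sum.inr e) ∨
     (s.head = Sum.inr e ∧ t.head = Sum.inr f))

/-- A solved AUE: distinct heads, no related absorption symbols, not wild. -/
def SolvedAUE {Sg : AbsSig F} (Th : AbsTh Sg) (a : AUE F) : Prop :=
  a.lhs.head ≠ a.rhs.head ∧ ¬ RelatedAbs Th a.lhs a.rhs ∧ ¬ WildAUE Sg a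

/-- A proper object term appearing in an AUE of a configuration: in
`Abs`-normal form, arity-respecting, ground, and wild-card free. -/
def GoodTm {Sg : AbsSig F} (Th : AbsTh Sg) (t : Tm F) : Prop :=
  NF Th t ∧ WFT Sg t ∧ (∀ x : ℕ, ¬ VarIn x t) ∧ ¬ SymOcc Sg.star t

/-- A configuration `⟨A; S; T; θ⟩`. -/
structure Config (F : Type) where
  A : Set (AUE F)
  S : Set (AUE F)
  T : Set (AUE F)
  θ : ℕ → Tm F

/-- The defining properties of configurations: `A`, `S`, `T` are (finite) valid
sets of unsolved, solved, resp. wild AUEs over object terms in `Abs`-normal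
form, `θ` is a substitution, (i) the labels of `A`, `S`, `T` and the domain of
`θ` are pairwise disjoint, and (ii) the variables occurring in the range of `θ`
are exactly the labels of `A`, `S` and `T`. -/
structure IsConfig {Sg : AbsSig F} (Th : AbsTh Sg) (C : Config F) : Prop where
  finA : C.A.Finite
  finS : C.S.Finite
  finT : C.T.Finite
  validA : ValidAUEs C.A
  validS : ValidAUEs C.S
  validT : ValidAUEs C.T
  goodA : ∀ a ∈ C.A, GoodTm Th a.lhs ∧ GoodTm Th a.rhs
  goodS : ∀ a ∈ C.S, GoodTm Th a.lhs ∧ GoodTm Th a.rhs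
  solvedS : ∀ a ∈ C.S, SolvedAUE Th a
  wildT : ∀ a ∈ C.T,
      (a.lhs = starTm Sg ∧ GoodTm Th a.rhs) ∨
      (a.rhs = starTm Sg ∧ GoodTm Th a.lhs)
  finDom : FinDom C.θ
  nfθ : ∀ x : ℕ, NF Th (C.θ x) ∧ WFT Sg (C.θ x)
  disjAS : Disjoint (labels C.A) (labels C.S)
  disjAT : Disjoint (labels C.A) (labels C.T)
  disjST : Disjoint (labels C.S) (labels C.T)
  disjAD : Disjoint (labels C.A) (Dom C.θ)
  disjSD : Disjoint (labels C.S) (Dom C.θ)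
  disjTD : Disjoint (labels C.T) (Dom C.θ)
  rvarEq : Rvar C.θ = labels C.A ∪ labels C.S ∪ labels C.T

/-- The substitution `{x ↦ t}`. -/
def single (x : ℕ) (t : Tm F) : ℕ → Tm F :=
  fun z => if z = x then t else .var z

/-- Composition `θ{x ↦ t}` of a substitution with a single binding. -/
def compOne (θ : ℕ → Tm F) (x : ℕ) (t : Tm F) : ℕ → Tm F :=
  fun z => (θ z).subst (single x t)

/-- A variable is fresh for a configuration. -/
def FreshIn (C : Config F) (y : ℕ) : Prop :=
  y ∉ labels C.A ∧ y ∉ labels C.S ∧ y ∉ labels C.T ∧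
  y ∉ Dom C.θ ∧ y ∉ Rvar C.θ

/-- Canonical choice of the next fresh variable for a configuration. -/
noncomputable def nextFresh (C : Config F) : ℕ :=
  sInf {k : ℕ | ∀ m : ℕ, k ≤ m → FreshIn C m}

/-- The set of AUEs `{s₁ ≜_{y₁} t₁, …, sₙ ≜_{yₙ} tₙ}`. -/
def zipAUEs (ss : List (Tm F)) (ys : List ℕ) (ts : List (Tm F)) : Set (AUE F) :=
  {a | ∃ (i : ℕ) (h1 : i < ss.length) (h2 : i < ys.length) (h3 : i < ts.length),
      a = ⟨ss.get ⟨i, h1⟩, ys.get ⟨i, h2⟩, ts.get ⟨i, h3⟩⟩}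

/-- The AUnif transformation rules: Decompose, Solve, the four Expansion rules
for left/right absorption, and Merge. -/
inductive Step {Sg : AbsSig F} (Th : AbsTh Sg) : Config F → Config F → Prop where
  | dec (f : F) (ss ts : List (Tm F)) (x : ℕ) (ys : List ℕ)
      (A S T : Set (AUE F)) (θ : ℕ → Tm F)
      (hlen : ss.length = ts.length)
      (hnotin : (⟨.app f ss, x, .app f ts⟩ : AUE F) ∉ A)
      (hys : ys = (List.range ss.length).map
          (fun i => nextFresh (⟨insert ⟨.app f ss, x, .app f ts⟩ A, S, T, θ⟩ : Config F) + i)) :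
      Step Th ⟨insert ⟨.app f ss, x, .app f ts⟩ A, S, T, θ⟩
        ⟨zipAUEs ss ys ts ∪ A, S, T, compOne θ x (.app f (ys.map Tm.var))⟩
  | sol (a : AUE F) (A S T : Set (AUE F)) (θ : ℕ → Tm F)
      (hhead : a.lhs.head ≠ a.rhs.head)
      (hrel : ¬ RelatedAbs Th a.lhs a.rhs)
      (hnotin : a ∉ A) :
      Step Th ⟨insert a A, S, T, θ⟩ ⟨A, insert a S, T, θ⟩
  | expLA1 (f e : F) (t1 t2 : Tm F) (x y1 y2 : ℕ)
      (A S T : Set (AUE F)) (θ : ℕ → Tm F)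
      (hp : (f, e) ∈ Th.pairs)
      (hnotin : (⟨.app e [], x, .app f [t1, t2]⟩ : AUE F) ∉ A)
      (hy1 : y1 = nextFresh (⟨insert ⟨.app e [], x, .app f [t1, t2]⟩ A, S, T, θ⟩ : Config F))
      (hy2 : y2 = y1 + 1) :
      Step Th ⟨insert ⟨.app e [], x, .app f [t1, t2]⟩ A, S, T, θ⟩
        ⟨insert ⟨.app e [], y1, t1⟩ A, S, insert ⟨starTm Sg, y2, t2⟩ T,
          compOne θ x (.app f [.var y1, .var y2])⟩
  | expLA2 (f e : F) (t1 t2 : Tm F) (x y1 y2 : ℕ)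
      (A S T : Set (AUE F)) (θ : ℕ → Tm F)
      (hp : (f, e) ∈ Th.pairs)
      (hnotin : (⟨.app e [], x, .app f [t1, t2]⟩ : AUE F) ∉ A)
      (hy1 : y1 = nextFresh (⟨insert ⟨.app e [], x, .app f [t1, t2]⟩ A, S, T, θ⟩ : Config F))
      (hy2 : y2 = y1 + 1) :
      Step Th ⟨insert ⟨.app e [], x, .app f [t1, t2]⟩ A, S, T, θ⟩
        ⟨insert ⟨.app e [], y2, t2⟩ A, S, insert ⟨starTm Sg, y1, t1⟩ T,
          compOne θ x (.app f [.var y1, .var y2])⟩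
  | expRA1 (f e : F) (s1 s2 : Tm F) (x y1 y2 : ℕ)
      (A S T : Set (AUE F)) (θ : ℕ → Tm F)
      (hp : (f, e) ∈ Th.pairs)
      (hnotin : (⟨.app f [s1, s2], x, .app e []⟩ : AUE F) ∉ A)
      (hy1 : y1 = nextFresh (⟨insert ⟨.app f [s1, s2], x, .app e []⟩ A, S, T, θ⟩ : Config F))
      (hy2 : y2 = y1 + 1) :
      Step Th ⟨insert ⟨.app f [s1, s2], x, .app e []⟩ A, S, T, θ⟩
        ⟨insert ⟨s1, y1, .app e []⟩ A, S, insert ⟨s2, y2, starTm Sg⟩ T,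
          compOne θ x (.app f [.var y1, .var y2])⟩
  | expRA2 (f e : F) (s1 s2 : Tm F) (x y1 y2 : ℕ)
      (A S T : Set (AUE F)) (θ : ℕ → Tm F)
      (hp : (f, e) ∈ Th.pairs)
      (hnotin : (⟨.app f [s1, s2], x, .app e []⟩ : AUE F) ∉ A)
      (hy1 : y1 = nextFresh (⟨insert ⟨.app f [s1, s2], x, .app e []⟩ A, S, T, θ⟩ : Config F))
      (hy2 : y2 = y1 + 1) :
      Step Th ⟨insert ⟨.app f [s1, s2], x, .app e []⟩ A, S, T, θ⟩
        ⟨insert ⟨s2, y2, .app e []⟩ A, S, insert ⟨s1, y1, starTm Sg⟩ T,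
          compOne θ x (.app f [.var y1, .var y2])⟩
  | mer (s t : Tm F) (x y : ℕ) (S T : Set (AUE F)) (θ : ℕ → Tm F)
      (hxy : x ≠ y)
      (hx : (⟨s, x, t⟩ : AUE F) ∉ S) (hy : (⟨s, y, t⟩ : AUE F) ∉ S) :
      Step Th ⟨∅, insert ⟨s, x, t⟩ (insert ⟨s, y, t⟩ S), T, θ⟩
        ⟨∅, insert ⟨s, y, t⟩ S, T, compOne θ x (.var y)⟩

/-- A final (normal) configuration: no rule applies. -/
def Final {Sg : AbsSig F} (Th : AbsTh Sg) (C : Config F) : Prop :=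
  ∀ C' : Config F, ¬ Step Th C C'

/-- `AUnif(C)`: the set of final configurations reachable from `C`. -/
def AUnifSet {Sg : AbsSig F} (Th : AbsTh Sg) (C : Config F) : Set (Config F) :=
  {C' | Relation.ReflTransGen (Step Th) C C' ∧ Final Th C'}

open Classical in
/-- The left substitution `σ_W` associated with a set of AUEs. -/
noncomputable def sigmaW (W : Set (AUE F)) : ℕ → Tm F :=
  fun y => if h : ∃ a, a ∈ W ∧ a.lab = y then h.choose.lhs else .var y

open Classical in
/-- The right substitution `ρ_W` associated with a set of AUEs. -/
noncomputable def rhoW (W : Set (AUE F)) : ℕ → Tm F :=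
  fun y => if h : ∃ a, a ∈ W ∧ a.lab = y then h.choose.rhs else .var y

/-- The abstraction set `↑(t, σ)`. -/
def absSet {Sg : AbsSig F} (Th : AbsTh Sg) (t : Tm F) (σ : ℕ → Tm F) : Set (Tm F) :=
  {r | AbsEq Th (r.subst σ) t ∧ NF Th r ∧ ∀ x : ℕ, VarIn x r → x ∈ Dom σ}

/-- `Ψ(T, S)`: the set of abstraction substitutions of a configuration with
abstraction `T` and store `S`. -/
def Psi {Sg : AbsSig F} (Th : AbsTh Sg) (T S : Set (AUE F)) : Set (ℕ → Tm F) :=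
  {τ | Dom τ = labels T ∧ ∀ a ∈ T,
      (a.lhs = starTm Sg → τ a.lab ∈ absSet Th a.rhs (rhoW S)) ∧
      (a.rhs = starTm Sg → τ a.lab ∈ absSet Th a.lhs (sigmaW S))}

/-- The initial configuration `⟨{s ≜_x t}; ∅; ∅; ι⟩` with starting label `xst`
and starting substitution `ι = {xst ↦ x}`. -/
def initConfig (s t : Tm F) (x xst : ℕ) : Config F :=
  ⟨{⟨s, x, t⟩}, ∅, ∅, single xst (.var x)⟩

/-- `AUnif(C₀)` is merged: identical solved AUEs in (possibly different) final
stores carry the same label, and equal labels carry identical AUEs. -/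
def Merged {Sg : AbsSig F} (Th : AbsTh Sg) (C0 : Config F) : Prop :=
  ∀ C1 ∈ AUnifSet Th C0, ∀ C2 ∈ AUnifSet Th C0, ∀ a ∈ C1.S, ∀ b ∈ C2.S,
    ((a.lhs = b.lhs ∧ a.rhs = b.rhs) ↔ a.lab = b.lab)

/-- `C_AUnif(s, t)`: all generalizations computed from final configurations of
the initial configuration for `s ≜_x t`, instantiated by abstraction
substitutions. -/
def CAUnif {Sg : AbsSig F} (Th : AbsTh Sg) (s t : Tm F) (x xst : ℕ) : Set (Tm F) :=
  {g | ∃ C' ∈ AUnifSet Th (initConfig s t x xst),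
      ∃ τ ∈ Psi Th C'.T C'.S, g = (C'.θ x).subst τ}

/-- Linear terms: no variable occurs more than once. -/
inductive Linear {F : Type} : Tm F → Prop where
  | var (x : ℕ) : Linear (.var x)
  | app (f : F) {ts : List (Tm F)} :
      (∀ t ∈ ts, Linear t) →
      List.Pairwise (fun s t => ∀ x : ℕ, VarIn x s → ¬ VarIn x t) ts →
      Linear (.app f ts)


/-! ### Auxiliary development: normal forms for absorption theories -/

section NFdev
variable {F : Type}

theorem subst_app (σ : ℕ → Tm F) (g : F) (ts : List (Tm F)) :
    (Tm.app g ts).subst σ = Tm.app g (ts.map (Tm.subst σ)) := by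
  rw [Tm.subst]
  congr 1
  simp [List.attach_map_val]

end NFdev

section NFdev1

variable {F : Type} {Sg : AbsSig F} (Th : AbsTh Sg)

open Classical in
/-- Normalization with respect to the absorption rewrite rules. -/
noncomputable def nf : Tm F → Tm F
  | .var x => .var x
  | .app g ts =>
      let l := ts.attach.map fun t => nf t.1
      if h : l.length = 2 ∧ ∃ e : F, (g, e) ∈ Th.pairs ∧ Tm.app e [] ∈ l
      then .app h.2.choose []
      else .app g l
decreasing_by
  have := List.sizeOf_lt_of_mem t.2
  simp only [Tm.app.sizeOf_spec]
  omega

open Classical in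
theorem nf_app (g : F) (ts : List (Tm F)) :
    nf Th (.app g ts) =
      if h : (ts.map (nf Th)).length = 2 ∧
          ∃ e : F, (g, e) ∈ Th.pairs ∧ Tm.app e [] ∈ ts.map (nf Th)
      then .app h.2.choose []
      else .app g (ts.map (nf Th)) := by
  rw [nf]
  simp [List.attach_map_val]

theorem nf_const (k : F) : nf Th (.app k []) = .app k [] := by
  rw [nf_app]; simp

end NFdev1

section NFdev2
variable {F : Type} {Sg : AbsSig F} {Th : AbsTh Sg}

theorem partner_unique {f e e' : F} (h1 : (f, e) ∈ Th.pairs) (h2 : (f, e') ∈ Th.pairs) :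
    e = e' := by
  by_contra hne
  have := Th.distinct _ h1 _ h2 (by simp [Prod.ext_iff]; tauto)
  exact this.1 rfl

theorem partner_unique_left {f f' e : F} (h1 : (f, e) ∈ Th.pairs) (h2 : (f', e) ∈ Th.pairs) :
    f = f' := by
  by_contra hne
  have := Th.distinct _ h1 _ h2 (by simp [Prod.ext_iff]; tauto)
  exact this.2.2.2 rfl

theorem nf_absL {f e : F} (t : Tm F) (hp : (f, e) ∈ Th.pairs) :
    nf Th (.app f [.app e [], t]) = .app e [] := by
  have hc : ((([Tm.app e [], t]).map (nf Th)).length = 2 ∧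
      ∃ e' : F, (f, e') ∈ Th.pairs ∧ Tm.app e' [] ∈ ([Tm.app e [], t]).map (nf Th)) :=
    ⟨by simp, e, hp, by simp [nf_const]⟩
  rw [nf_app, dif_pos hc]
  rw [partner_unique hc.2.choose_spec.1 hp]

theorem nf_absR {f e : F} (t : Tm F) (hp : (f, e) ∈ Th.pairs) :
    nf Th (.app f [t, .app e []]) = .app e [] := by
  have hc : ((([t, Tm.app e []]).map (nf Th)).length = 2 ∧
      ∃ e' : F, (f, e') ∈ Th.pairs ∧ Tm.app e' [] ∈ ([t, Tm.app e []]).map (nf Th)) :=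
    ⟨by simp, e, hp, by simp [nf_const]⟩
  rw [nf_app, dif_pos hc]
  rw [partner_unique hc.2.choose_spec.1 hp]

theorem nf_sound {s t : Tm F} (h : AbsEq Th s t) : nf Th s = nf Th t := by
  refine AbsEq.rec (motive_1 := fun s t _ => nf Th s = nf Th t)
    (motive_2 := fun ss ts _ => ss.map (nf Th) = ts.map (nf Th))
    ?_ ?_ ?_ ?_ ?_ ?_ ?_ ?_ h
  · intro f e t hp; exact (nf_absL t hp).trans (nf_const Th _).symm
  · intro f e t hp; exact (nf_absR t hp).trans (nf_const Th _).symm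
  · intro t; rfl
  · intro s t _ ih; exact ih.symm
  · intro s t u _ _ ih1 ih2; exact ih1.trans ih2
  · intro g ss ts _ ih
    rw [nf_app, nf_app, ih]
  · rfl
  · intro a b l1 l2 _ _ ih1 ih2; simp [ih1, ih2]

theorem forall₂_self_map {ts : List (Tm F)} (h : ∀ t ∈ ts, AbsEq Th t (nf Th t)) :
    List.Forall₂ (AbsEq Th) ts (ts.map (nf Th)) := by
  induction ts with
  | nil => simp
  | cons a l ih =>
      simp only [List.map_cons]
      exact List.Forall₂.cons (h a (by simp)) (ih fun t ht => h t (by simp [ht]))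

theorem nf_self : ∀ t : Tm F, AbsEq Th t (nf Th t)
  | .var x => by rw [nf]; exact AbsEq.refl _
  | .app g ts => by
      have hts : ∀ t ∈ ts, AbsEq Th t (nf Th t) := fun t ht =>
        have : sizeOf t < sizeOf (Tm.app g ts) := by
          have := List.sizeOf_lt_of_mem ht
          simp only [Tm.app.sizeOf_spec]; omega
        nf_self t
      have step : AbsEq Th (.app g ts) (.app g (ts.map (nf Th))) :=
        AbsEq.congr g (forall₂_self_map hts)
      rw [nf_app]
      split
      · next hcond =>
          obtain ⟨hp1, hmem⟩ := hcond.2.choose_spec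
          generalize hcond.2.choose = e1 at hp1 hmem ⊢
          have hlen : ts.length = 2 := by simpa using hcond.1
          obtain ⟨p, q, rfl⟩ := List.length_eq_two.mp hlen
          simp only [List.map_cons, List.map_nil, List.mem_cons,
            List.not_mem_nil, or_false] at hmem
          refine AbsEq.trans step ?_
          simp only [List.map_cons, List.map_nil]
          rcases hmem with h1 | h1
          · rw [← h1]; exact AbsEq.absL _ hp1
          · rw [← h1]; exact AbsEq.absR _ hp1
      · next => exact step
decreasing_by
  assumption

end NFdev2

section Inv
variable {F : Type} {Sg : AbsSig F} {Th : AbsTh Sg}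

theorem subst_var (μ : ℕ → Tm F) (z : ℕ) : (Tm.var z).subst μ = μ z := by
  rw [Tm.subst]

theorem congr2 {g : F} {s1 s2 t1 t2 : Tm F} (h1 : AbsEq Th s1 t1) (h2 : AbsEq Th s2 t2) :
    AbsEq Th (.app g [s1, s2]) (.app g [t1, t2]) :=
  AbsEq.congr g (List.Forall₂.cons h1 (List.Forall₂.cons h2 List.Forall₂.nil))

theorem invK {k : F} {s : Tm F} {μ : ℕ → Tm F}
    (h : nf Th (s.subst μ) = .app k []) :
    (∃ z, s = .var z ∧ nf Th (μ z) = .app k []) ∨ s = .app k [] ∨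
    ∃ (g : F) (u v : Tm F), (g, k) ∈ Th.pairs ∧ s = .app g [u, v] ∧
      (nf Th (u.subst μ) = .app k [] ∨ nf Th (v.subst μ) = .app k []) := by
  cases s with
  | var z => rw [subst_var] at h; exact Or.inl ⟨z, rfl, h⟩
  | app g ws =>
      rw [subst_app, nf_app] at h
      split at h
      · next hc =>
          obtain ⟨hp1, hmem⟩ := hc.2.choose_spec
          generalize hc.2.choose = e1 at hp1 hmem h
          obtain ⟨hke, -⟩ := Tm.app.inj h
          subst hke
          have hlen : ws.length = 2 := by simpa using hc.1
          obtain ⟨u, v, rfl⟩ := List.length_eq_two.mp hlen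
          simp only [List.map_cons, List.map_nil, List.mem_cons,
            List.not_mem_nil, or_false] at hmem
          exact Or.inr (Or.inr ⟨g, u, v, hp1, rfl,
            hmem.imp (fun h' => h'.symm) (fun h' => h'.symm)⟩)
      · next =>
          obtain ⟨hgk, hws⟩ := Tm.app.inj h
          subst hgk
          have : ws = [] := by simpa using congrArg List.length hws
          subst this
          exact Or.inr (Or.inl rfl)

theorem invF {g0 : F} {w1 w2 : Tm F} {s : Tm F} {μ : ℕ → Tm F}
    (h : nf Th (s.subst μ) = .app g0 [w1, w2]) :
    (∃ z, s = .var z ∧ nf Th (μ z) = .app g0 [w1, w2]) ∨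
    ∃ u v, s = .app g0 [u, v] ∧ nf Th (u.subst μ) = w1 ∧ nf Th (v.subst μ) = w2 := by
  cases s with
  | var z => rw [subst_var] at h; exact Or.inl ⟨z, rfl, h⟩
  | app g ws =>
      rw [subst_app, nf_app] at h
      split at h
      · next hc =>
          obtain ⟨-, hws⟩ := Tm.app.inj h
          exact absurd hws (by simp)
      · next =>
          obtain ⟨hgk, hws⟩ := Tm.app.inj h
          subst hgk
          have hlen : ws.length = 2 := by
            have := congrArg List.length hws; simpa using this
          obtain ⟨u, v, rfl⟩ := List.length_eq_two.mp hlen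
          simp only [List.map_cons, List.map_nil, List.cons.injEq, and_true] at hws
          exact Or.inr ⟨u, v, rfl, hws.1, hws.2⟩

theorem L1 {k : F} {τ δ : ℕ → Tm F} (s : Tm F)
    (h : nf Th (s.subst τ) = .app k [])
    (hvar : ∀ z, VarIn z s → nf Th (τ z) = .app k [] → AbsEq Th (δ z) (.app k [])) :
    AbsEq Th (s.subst δ) (.app k []) := by
  rcases invK h with ⟨z, heq, hz⟩ | heq | ⟨g, u, v, hp, heq, hd⟩
  · rw [heq, subst_var]; exact hvar z (heq ▸ VarIn.var z) hz
  · rw [heq, subst_app]; exact AbsEq.refl _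
  · rw [heq, subst_app]
    simp only [List.map_cons, List.map_nil]
    rcases hd with hd | hd
    · have ihu : AbsEq Th (u.subst δ) (.app k []) :=
        L1 u hd (fun z hz hnf => hvar z (heq ▸ VarIn.app g (by simp) hz) hnf)
      exact AbsEq.trans (congr2 ihu (AbsEq.refl _)) (AbsEq.absL _ hp)
    · have ihv : AbsEq Th (v.subst δ) (.app k []) :=
        L1 v hd (fun z hz hnf => hvar z (heq ▸ VarIn.app g (by simp) hz) hnf)
      exact AbsEq.trans (congr2 (AbsEq.refl _) ihv) (AbsEq.absR _ hp)
termination_by sizeOf s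
decreasing_by
  all_goals (simp_wf; rw [heq]; simp only [Tm.app.sizeOf_spec, List.cons.sizeOf_spec, List.nil.sizeOf_spec]; omega)

end Inv

section Inv2
variable {F : Type} {Sg : AbsSig F} {Th : AbsTh Sg}

theorem L2 {g0 k1 k2 : F} {τ δ : ℕ → Tm F} (s : Tm F)
    (h : nf Th (s.subst τ) = .app g0 [.app k1 [], .app k2 []])
    (hvar : ∀ z, VarIn z s →
      (nf Th (τ z) = .app k1 [] → AbsEq Th (δ z) (.app k1 [])) ∧
      (nf Th (τ z) = .app k2 [] → AbsEq Th (δ z) (.app k2 [])) ∧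
      (nf Th (τ z) = .app g0 [.app k1 [], .app k2 []] →
        AbsEq Th (δ z) (.app g0 [.app k1 [], .app k2 []]))) :
    AbsEq Th (s.subst δ) (.app g0 [.app k1 [], .app k2 []]) := by
  rcases invF h with ⟨z, heq, hz⟩ | ⟨u, v, heq, h1, h2⟩
  · rw [heq, subst_var]; exact (hvar z (heq ▸ VarIn.var z)).2.2 hz
  · rw [heq, subst_app]
    simp only [List.map_cons, List.map_nil]
    exact congr2
      (L1 u h1 fun z hz hn => (hvar z (heq ▸ VarIn.app g0 (by simp) hz)).1 hn)
      (L1 v h2 fun z hz hn => (hvar z (heq ▸ VarIn.app g0 (by simp) hz)).2.1 hn)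

theorem nf_var (z : ℕ) : nf Th (Tm.var z) = Tm.var z := by rw [nf]

theorem nf_app2 {f e : F} (hfe : (f, e) ∈ Th.pairs) (u v : Tm F)
    (hu : nf Th u ≠ .app e []) (hv : nf Th v ≠ .app e []) :
    nf Th (.app f [u, v]) = .app f [nf Th u, nf Th v] := by
  rw [nf_app, dif_neg]
  · simp
  · rintro ⟨-, e', he', hm⟩
    have : e' = e := partner_unique he' hfe
    subst this
    simp only [List.map_cons, List.map_nil, List.mem_cons, List.not_mem_nil, or_false] at hm
    rcases hm with hm | hm
    · exact hu hm.symm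
    · exact hv hm.symm

theorem nf_subst_const (δ : ℕ → Tm F) (k : F) :
    nf Th ((Tm.app k []).subst δ) = .app k [] := by
  rw [subst_app]; simp only [List.map_nil]; exact nf_const Th k

theorem findom_single (z : ℕ) (t : Tm F) : FinDom (single z t) := by
  apply Set.Finite.subset (Set.finite_singleton z)
  intro y hy
  simp only [Dom, single, Set.mem_setOf_eq] at hy
  by_contra hne
  simp only [Set.mem_singleton_iff] at hne
  rw [if_neg hne] at hy
  exact hy rfl

theorem findom_update {τ : ℕ → Tm F} (hτ : FinDom τ) (z : ℕ) (t : Tm F) :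
    FinDom (fun y => if y = z then t else τ y) := by
  apply Set.Finite.subset (hτ.insert z)
  intro y hy
  simp only [Dom, Set.mem_setOf_eq] at hy
  by_cases hz : y = z
  · exact Set.mem_insert_iff.mpr (Or.inl hz)
  · rw [if_neg hz] at hy
    exact Set.mem_insert_iff.mpr (Or.inr hy)

end Inv2

/-- Example 2: for an absorption pair `(f, ε_f)` and pairwise
distinct ordinary constants `a`, `b`, `c` different from `ε_f`, the set
`{f(f(x,c),a), f(f(b,x),a), f(f(b,c),x)}` is a minimal complete set of
`Abs`-generalizations of `ε_f` and `f(f(b,c),a)`. -/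
theorem mcsg_example {F : Type} {Sg : AbsSig F} (Th : AbsTh Sg)
    (f e a b c : F) (x : ℕ)
    (hfe : (f, e) ∈ Th.pairs)
    (ha : Sg.arity a = 0) (hb : Sg.arity b = 0) (hc : Sg.arity c = 0)
    (hab : a ≠ b) (hac : a ≠ c) (hbc : b ≠ c)
    (hae : a ≠ e) (hbe : b ≠ e) (hce : c ≠ e) :
    IsMCSG Th
      ({Tm.app f [Tm.app f [Tm.var x, Tm.app c []], Tm.app a []],
        Tm.app f [Tm.app f [Tm.app b [], Tm.var x], Tm.app a []],
        Tm.app f [Tm.app f [Tm.app b [], Tm.app c []], Tm.var x]} : Set (Tm F))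
      (Tm.app e [])
      (Tm.app f [Tm.app f [Tm.app b [], Tm.app c []], Tm.app a []]) := by
  classical
  have hfa : f ≠ a := by
    intro h; have h2 := Th.binary _ hfe; rw [h, ha] at h2; exact absurd h2 (by decide)
  have hfb : f ≠ b := by
    intro h; have h2 := Th.binary _ hfe; rw [h, hb] at h2; exact absurd h2 (by decide)
  have hfc : f ≠ c := by
    intro h; have h2 := Th.binary _ hfe; rw [h, hc] at h2; exact absurd h2 (by decide)
  have hfene : f ≠ e := Th.ne _ hfe
  -- notation
  set Ec : Tm F := Tm.app e [] with hEc
  set Ac : Tm F := Tm.app a [] with hAc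
  set Bc : Tm F := Tm.app b [] with hBc
  set Cc : Tm F := Tm.app c [] with hCc
  set FBC : Tm F := Tm.app f [Bc, Cc] with hFBC
  set G : Tm F := Tm.app f [FBC, Ac] with hG
  set t1 : Tm F := Tm.app f [Tm.app f [Tm.var x, Cc], Ac] with ht1
  set t2 : Tm F := Tm.app f [Tm.app f [Bc, Tm.var x], Ac] with ht2
  set t3 : Tm F := Tm.app f [FBC, Tm.var x] with ht3
  -- normal form computations
  have hnfFBC : nf Th FBC = FBC := by
    rw [hFBC, nf_app2 hfe Bc Cc]
    · rw [nf_const, nf_const]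
    · rw [nf_const]; simp [hBc, hEc, Tm.app.injEq]; exact fun h => hbe h
    · rw [nf_const]; simp [hCc, hEc, Tm.app.injEq]; exact fun h => hce h
  have hnfG : nf Th G = G := by
    rw [hG, nf_app2 hfe FBC Ac, hnfFBC, nf_const]
    · rw [hnfFBC]; simp [hFBC, hEc]
    · rw [nf_const]; simp [hAc, hEc, Tm.app.injEq]; exact fun h => hae h
  refine ⟨?_, ?_, ?_⟩
  · -- subset
    rintro r hr
    simp only [Set.mem_insert_iff, Set.mem_singleton_iff] at hr
    simp only [GAbs, Set.mem_setOf_eq, Gen]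
    rcases hr with rfl | rfl | rfl
    · exact ⟨⟨single x Ec, findom_single _ _, by
          simp only [ht1, ht2, ht3, hEc, hAc, hBc, hCc, hFBC, hG, subst_app, List.map_cons, List.map_nil, subst_var, single, if_pos rfl]
          exact AbsEq.trans (congr2 (AbsEq.absL _ hfe) (AbsEq.refl _)) (AbsEq.absL _ hfe)⟩,
        ⟨single x Bc, findom_single _ _, by
          simp only [ht1, ht2, ht3, hEc, hAc, hBc, hCc, hFBC, hG, subst_app, List.map_cons, List.map_nil, subst_var, single, if_pos rfl]
          exact AbsEq.refl _⟩⟩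
    · exact ⟨⟨single x Ec, findom_single _ _, by
          simp only [ht1, ht2, ht3, hEc, hAc, hBc, hCc, hFBC, hG, subst_app, List.map_cons, List.map_nil, subst_var, single, if_pos rfl]
          exact AbsEq.trans (congr2 (AbsEq.absR _ hfe) (AbsEq.refl _)) (AbsEq.absL _ hfe)⟩,
        ⟨single x Cc, findom_single _ _, by
          simp only [ht1, ht2, ht3, hEc, hAc, hBc, hCc, hFBC, hG, subst_app, List.map_cons, List.map_nil, subst_var, single, if_pos rfl]
          exact AbsEq.refl _⟩⟩
    · exact ⟨⟨single x Ec, findom_single _ _, by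
          simp only [ht1, ht2, ht3, hEc, hAc, hBc, hCc, hFBC, hG, subst_app, List.map_cons, List.map_nil, subst_var, single, if_pos rfl]
          exact AbsEq.absR _ hfe⟩,
        ⟨single x Ac, findom_single _ _, by
          simp only [ht1, ht2, ht3, hEc, hAc, hBc, hCc, hFBC, hG, subst_app, List.map_cons, List.map_nil, subst_var, single, if_pos rfl]
          exact AbsEq.refl _⟩⟩
  · -- completeness
    intro r hr
    obtain ⟨⟨σ, hσf, hσe⟩, ⟨τ, hτf, hτg⟩⟩ := hr
    have hnσ : nf Th (r.subst σ) = Tm.app e [] :=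
      (nf_sound hσe).trans (nf_const Th e)
    have hnτ : nf Th (r.subst τ) = Tm.app f [FBC, Ac] :=
      (nf_sound hτg).trans hnfG
    rcases invF hnτ with ⟨z, heq, -⟩ | ⟨r1, r2, heq, h1, h2⟩
    · -- r is a variable
      refine ⟨t3, by simp, single z t3, findom_single _ _, ?_⟩
      rw [heq, subst_var]
      simp only [single, reduceIte]
      exact AbsEq.refl t3
    · rw [heq] at hnσ
      rcases invK hnσ with ⟨z, hcon, -⟩ | hcon | ⟨g', u', v', hg', hequv, heps⟩
      · exact absurd hcon (by simp)
      · exact absurd hcon (by simp)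
      · have hg'f : f = g' := (Tm.app.inj hequv).1
        subst hg'f
        have hl := (Tm.app.inj hequv).2
        simp only [List.cons.injEq, and_true] at hl
        obtain ⟨rfl, rfl⟩ := hl
        rcases heps with h1σ | h2σ
        · -- the ε-variable is inside r1
          rcases invK h1σ with ⟨z1, heq1, hz1⟩ | heq1 | ⟨g1, u, v, hg1, heq1, hepsuv⟩
          · -- r1 is a variable z1 : use t1
            have hτz1 : nf Th (τ z1) = FBC := by rw [heq1, subst_var] at h1; exact h1
            refine ⟨t1, by simp,
              (fun y => if y = z1 then Tm.app f [Tm.var x, Cc] else τ y),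
              findom_update hτf _ _, ?_⟩
            rw [heq, heq1, ht1, subst_app]
            simp only [List.map_cons, List.map_nil, subst_var, reduceIte]
            refine congr2 (AbsEq.refl _) ?_
            refine L1 r2 (show nf Th (r2.subst τ) = Tm.app a [] from h2) ?_
            intro z hz hcon
            by_cases hzz : z = z1
            · subst hzz
              rw [hτz1, hFBC] at hcon
              exact absurd (Tm.app.inj hcon).2 (by simp)
            · simp only [if_neg hzz]
              exact hcon ▸ nf_self (τ z)
          · -- r1 = ε : impossible
            rw [heq1, nf_subst_const, hFBC] at h1
            exact absurd (Tm.app.inj h1).2 (by simp)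
          · -- r1 = f(u,v)
            have hsy : f = g1 := (partner_unique_left hg1 hfe).symm
            subst hsy
            rw [heq1] at h1
            have h1' : nf Th ((Tm.app f [u, v]).subst τ) = Tm.app f [Tm.app b [], Tm.app c []] := by
              rw [h1, hFBC, hBc, hCc]
            rcases invF h1' with ⟨z, hcon, -⟩ | ⟨u2, v2, hequ, hu, hv⟩
            · exact absurd hcon (by simp)
            · have hl2 := (Tm.app.inj hequ).2
              simp only [List.cons.injEq, and_true] at hl2
              obtain ⟨rfl, rfl⟩ := hl2
              rcases hepsuv with huσ | hvσ
              · -- u holds the ε-variable : target t1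
                rcases invK huσ with ⟨z1, hequ1, hz1⟩ | hequ1 | ⟨g2, u3, v3, hg2, hequ2, -⟩
                · have hτz1 : nf Th (τ z1) = Tm.app b [] := by
                    rw [hequ1, subst_var] at hu; exact hu
                  refine ⟨t1, by simp, (fun y => if y = z1 then Tm.var x else τ y),
                    findom_update hτf _ _, ?_⟩
                  rw [heq, heq1, hequ1, ht1, subst_app]
                  simp only [subst_app, List.map_cons, List.map_nil, subst_var, reduceIte]
                  refine congr2 (congr2 (AbsEq.refl _) ?_) ?_
                  · refine L1 v (show nf Th (v.subst τ) = Tm.app c [] from hv) ?_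
                    intro z hz hcon
                    by_cases hzz : z = z1
                    · subst hzz
                      rw [hτz1] at hcon
                      exact absurd (Tm.app.inj hcon).1 hbc
                    · simp only [if_neg hzz]
                      exact hcon ▸ nf_self (τ z)
                  · refine L1 r2 (show nf Th (r2.subst τ) = Tm.app a [] from h2) ?_
                    intro z hz hcon
                    by_cases hzz : z = z1
                    · subst hzz
                      rw [hτz1] at hcon
                      exact absurd (Tm.app.inj hcon).1 (Ne.symm hab)
                    · simp only [if_neg hzz]
                      exact hcon ▸ nf_self (τ z)
                · rw [hequ1, nf_subst_const] at hu
                  exact absurd (Tm.app.inj hu).1 (Ne.symm hbe)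
                · have hsy : f = g2 := (partner_unique_left hg2 hfe).symm
                  subst hsy
                  rw [hequ2, subst_app, nf_app] at hu
                  split at hu
                  · next hcnd =>
                      obtain ⟨hp2, -⟩ := hcnd.2.choose_spec
                      generalize hcnd.2.choose = e2 at hp2 hu
                      have hsy2 : b = e2 := ((Tm.app.inj hu).1).symm
                      subst hsy2
                      exact absurd (partner_unique hfe hp2) (Ne.symm hbe)
                  · next => exact absurd (Tm.app.inj hu).2 (by simp)
              · -- v holds the ε-variable : target t2
                rcases invK hvσ with ⟨z1, hequ1, hz1⟩ | hequ1 | ⟨g2, u3, v3, hg2, hequ2, -⟩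
                · have hτz1 : nf Th (τ z1) = Tm.app c [] := by
                    rw [hequ1, subst_var] at hv; exact hv
                  refine ⟨t2, by simp, (fun y => if y = z1 then Tm.var x else τ y),
                    findom_update hτf _ _, ?_⟩
                  rw [heq, heq1, hequ1, ht2, subst_app]
                  simp only [subst_app, List.map_cons, List.map_nil, subst_var, reduceIte]
                  refine congr2 (congr2 ?_ (AbsEq.refl _)) ?_
                  · refine L1 u (show nf Th (u.subst τ) = Tm.app b [] from hu) ?_
                    intro z hz hcon
                    by_cases hzz : z = z1
                    · subst hzz
                      rw [hτz1] at hcon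
                      exact absurd (Tm.app.inj hcon).1 (Ne.symm hbc)
                    · simp only [if_neg hzz]
                      exact hcon ▸ nf_self (τ z)
                  · refine L1 r2 (show nf Th (r2.subst τ) = Tm.app a [] from h2) ?_
                    intro z hz hcon
                    by_cases hzz : z = z1
                    · subst hzz
                      rw [hτz1] at hcon
                      exact absurd (Tm.app.inj hcon).1 (Ne.symm hac)
                    · simp only [if_neg hzz]
                      exact hcon ▸ nf_self (τ z)
                · rw [hequ1, nf_subst_const] at hv
                  exact absurd (Tm.app.inj hv).1 (Ne.symm hce)
                · have hsy : f = g2 := (partner_unique_left hg2 hfe).symm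
                  subst hsy
                  rw [hequ2, subst_app, nf_app] at hv
                  split at hv
                  · next hcnd =>
                      obtain ⟨hp2, -⟩ := hcnd.2.choose_spec
                      generalize hcnd.2.choose = e2 at hp2 hv
                      have hsy2 : c = e2 := ((Tm.app.inj hv).1).symm
                      subst hsy2
                      exact absurd (partner_unique hfe hp2) (Ne.symm hce)
                  · next => exact absurd (Tm.app.inj hv).2 (by simp)
        · -- the ε-variable is r2 : target t3
          rcases invK h2σ with ⟨z2, heq2, hz2⟩ | heq2 | ⟨g2, u2, v2, hg2, heq2, -⟩
          · have hτz2 : nf Th (τ z2) = Ac := by rw [heq2, subst_var] at h2; exact h2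
            refine ⟨t3, by simp, (fun y => if y = z2 then Tm.var x else τ y),
              findom_update hτf _ _, ?_⟩
            rw [heq, heq2, ht3, subst_app]
            simp only [List.map_cons, List.map_nil, subst_var, reduceIte]
            refine congr2 ?_ (AbsEq.refl _)
            have h1' : nf Th (r1.subst τ) = Tm.app f [Tm.app b [], Tm.app c []] := by
              rw [h1, hFBC, hBc, hCc]
            refine L2 r1 h1' ?_
            intro z hz
            by_cases hzz : z = z2
            · subst hzz
              rw [hAc] at hτz2
              refine ⟨fun hcon => ?_, fun hcon => ?_, fun hcon => ?_⟩
              · rw [hτz2] at hcon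
                exact absurd (Tm.app.inj hcon).1 hab
              · rw [hτz2] at hcon
                exact absurd (Tm.app.inj hcon).1 hac
              · rw [hτz2] at hcon
                exact absurd (Tm.app.inj hcon).1 hfa.symm
            · simp only [if_neg hzz]
              exact ⟨fun hcon => hcon ▸ nf_self (τ z), fun hcon => hcon ▸ nf_self (τ z),
                fun hcon => hcon ▸ nf_self (τ z)⟩
          · rw [heq2, nf_subst_const, hAc] at h2
            exact absurd (Tm.app.inj h2).1 (Ne.symm hae)
          · have hsy : f = g2 := (partner_unique_left hg2 hfe).symm
            subst hsy
            rw [heq2, subst_app, nf_app] at h2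
            split at h2
            · next hcnd =>
                obtain ⟨hp2, -⟩ := hcnd.2.choose_spec
                generalize hcnd.2.choose = e2 at hp2 h2
                rw [hAc] at h2
                have hsy2 : a = e2 := ((Tm.app.inj h2).1).symm
                subst hsy2
                exact absurd (partner_unique hfe hp2) (Ne.symm hae)
            · next =>
                rw [hAc] at h2
                exact absurd (Tm.app.inj h2).2 (by simp)
  · -- minimality
    have hnft1 : nf Th t1 = Tm.app f [Tm.app f [Tm.var x, Tm.app c []], Tm.app a []] := by
      rw [ht1, hCc, hAc]
      have inner : nf Th (Tm.app f [Tm.var x, Tm.app c []])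
          = Tm.app f [Tm.var x, Tm.app c []] := by
        rw [nf_app2 hfe]
        · rw [nf_var, nf_const]
        · rw [nf_var]; simp
        · rw [nf_const]; simp [Tm.app.injEq, hce]
      rw [nf_app2 hfe]
      · rw [inner, nf_const]
      · rw [inner]; simp
      · rw [nf_const]; simp [Tm.app.injEq, hae]
    have hnft2 : nf Th t2 = Tm.app f [Tm.app f [Tm.app b [], Tm.var x], Tm.app a []] := by
      rw [ht2, hBc, hAc]
      have inner : nf Th (Tm.app f [Tm.app b [], Tm.var x])
          = Tm.app f [Tm.app b [], Tm.var x] := by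
        rw [nf_app2 hfe]
        · rw [nf_var, nf_const]
        · rw [nf_const]; simp [Tm.app.injEq, hbe]
        · rw [nf_var]; simp
      rw [nf_app2 hfe]
      · rw [inner, nf_const]
      · rw [inner]; simp
      · rw [nf_const]; simp [Tm.app.injEq, hae]
    have hnft3 : nf Th t3 = Tm.app f [Tm.app f [Tm.app b [], Tm.app c []], Tm.var x] := by
      rw [ht3]
      rw [nf_app2 hfe]
      · rw [nf_var, hnfFBC, hFBC, hBc, hCc]
      · rw [hnfFBC]; simp [hFBC, hEc]
      · rw [nf_var]; simp
    intro r hr r' hr' hmg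
    simp only [Set.mem_insert_iff, Set.mem_singleton_iff] at hr hr'
    obtain ⟨δ, -, hd⟩ := hmg
    have hn := nf_sound hd
    rcases hr with rfl | rfl | rfl <;> rcases hr' with rfl | rfl | rfl
    · rfl
    · -- t1 ≲ t2 impossible
      exfalso
      rw [hnft2, ht1, hCc, hAc] at hn
      rcases invF hn with ⟨z, hcon, -⟩ | ⟨u, v, hequ, hu, hv⟩
      · exact absurd hcon (by simp)
      · have hl := (Tm.app.inj hequ).2
        simp only [List.cons.injEq, and_true] at hl
        obtain ⟨rfl, rfl⟩ := hl
        rcases invF hu with ⟨z, hcon, -⟩ | ⟨p, q, hequ2, hp, hq⟩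
        · exact absurd hcon (by simp)
        · have hl2 := (Tm.app.inj hequ2).2
          simp only [List.cons.injEq, and_true] at hl2
          obtain ⟨rfl, rfl⟩ := hl2
          rw [nf_subst_const] at hq
          exact absurd hq (by simp)
    · -- t1 ≲ t3 impossible
      exfalso
      rw [hnft3, ht1, hCc, hAc] at hn
      rcases invF hn with ⟨z, hcon, -⟩ | ⟨u, v, hequ, hu, hv⟩
      · exact absurd hcon (by simp)
      · have hl := (Tm.app.inj hequ).2
        simp only [List.cons.injEq, and_true] at hl
        obtain ⟨rfl, rfl⟩ := hl
        rw [nf_subst_const] at hv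
        exact absurd hv (by simp)
    · -- t2 ≲ t1 impossible
      exfalso
      rw [hnft1, ht2, hBc, hAc] at hn
      rcases invF hn with ⟨z, hcon, -⟩ | ⟨u, v, hequ, hu, hv⟩
      · exact absurd hcon (by simp)
      · have hl := (Tm.app.inj hequ).2
        simp only [List.cons.injEq, and_true] at hl
        obtain ⟨rfl, rfl⟩ := hl
        rcases invF hu with ⟨z, hcon, -⟩ | ⟨p, q, hequ2, hp, hq⟩
        · exact absurd hcon (by simp)
        · have hl2 := (Tm.app.inj hequ2).2
          simp only [List.cons.injEq, and_true] at hl2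
          obtain ⟨rfl, rfl⟩ := hl2
          rw [nf_subst_const] at hp
          exact absurd hp (by simp)
    · rfl
    · -- t2 ≲ t3 impossible
      exfalso
      rw [hnft3, ht2, hBc, hAc] at hn
      rcases invF hn with ⟨z, hcon, -⟩ | ⟨u, v, hequ, hu, hv⟩
      · exact absurd hcon (by simp)
      · have hl := (Tm.app.inj hequ).2
        simp only [List.cons.injEq, and_true] at hl
        obtain ⟨rfl, rfl⟩ := hl
        rw [nf_subst_const] at hv
        exact absurd hv (by simp)
    · -- t3 ≲ t1 impossible
      exfalso
      rw [hnft1, ht3, hFBC, hBc, hCc] at hn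
      rcases invF hn with ⟨z, hcon, -⟩ | ⟨u, v, hequ, hu, hv⟩
      · exact absurd hcon (by simp)
      · have hl := (Tm.app.inj hequ).2
        simp only [List.cons.injEq, and_true] at hl
        obtain ⟨rfl, rfl⟩ := hl
        rcases invF hu with ⟨z, hcon, -⟩ | ⟨p, q, hequ2, hp, hq⟩
        · exact absurd hcon (by simp)
        · have hl2 := (Tm.app.inj hequ2).2
          simp only [List.cons.injEq, and_true] at hl2
          obtain ⟨rfl, rfl⟩ := hl2
          rw [nf_subst_const] at hp
          exact absurd hp (by simp)
    · -- t3 ≲ t2 impossible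
      exfalso
      rw [hnft2, ht3, hFBC, hBc, hCc] at hn
      rcases invF hn with ⟨z, hcon, -⟩ | ⟨u, v, hequ, hu, hv⟩
      · exact absurd hcon (by simp)
      · have hl := (Tm.app.inj hequ).2
        simp only [List.cons.injEq, and_true] at hl
        obtain ⟨rfl, rfl⟩ := hl
        rcases invF hu with ⟨z, hcon, -⟩ | ⟨p, q, hequ2, hp, hq⟩
        · exact absurd hcon (by simp)
        · have hl2 := (Tm.app.inj hequ2).2
          simp only [List.cons.injEq, and_true] at hl2
          obtain ⟨rfl, rfl⟩ := hl2
          rw [nf_subst_const] at hq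
          exact absurd hq (by simp)
    · rfl

end AbsAU
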